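/- For fixed $p > 1$ and $c > 1$, the quantity $h(c) = \frac{(c^p - 1)(c^{p-1} - 1)}{c^{p-1}(c - 1)} - p(p-1)\log c$ is nonnegative. -/

import Mathlib

open Real MeasureTheory intervalIntegral

lemma ptwise (p : ℝ) (hp : 1 < p) {s t : ℝ} (hs : 0 < s) (ht : 0 < t) :
    s⁻¹ + t⁻¹ ≤ s ^ (p - 1) * t ^ (-p) + t ^ (p - 1) * s ^ (-p) := by
  have key : (s ^ (p - 1) - t ^ (p - 1)) * (s ^ (-p) - t ^ (-p)) ≤ 0 := by
    rcases le_total s t with h | h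
    · apply mul_nonpos_of_nonpos_of_nonneg
      · have := Real.rpow_le_rpow hs.le h (by linarith : (0:ℝ) ≤ p - 1)
        linarith
      · have h1 : t ^ (-p) ≤ s ^ (-p) := by
          rw [Real.rpow_neg hs.le, Real.rpow_neg ht.le]
          exact inv_anti₀ (Real.rpow_pos_of_pos hs p)
            (Real.rpow_le_rpow hs.le h (by linarith))
        linarith
    · apply mul_nonpos_of_nonneg_of_nonpos
      · have := Real.rpow_le_rpow ht.le h (by linarith : (0:ℝ) ≤ p - 1)
        linarith
      · have h1 : s ^ (-p) ≤ t ^ (-p) := by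
          rw [Real.rpow_neg hs.le, Real.rpow_neg ht.le]
          exact inv_anti₀ (Real.rpow_pos_of_pos ht p)
            (Real.rpow_le_rpow ht.le h (by linarith))
        linarith
  have e1 : s ^ (p - 1) * s ^ (-p) = s⁻¹ := by
    rw [← Real.rpow_add hs, show p - 1 + -p = -1 by ring, Real.rpow_neg_one]
  have e2 : t ^ (p - 1) * t ^ (-p) = t⁻¹ := by
    rw [← Real.rpow_add ht, show p - 1 + -p = -1 by ring, Real.rpow_neg_one]
  nlinarith [key]

-- Chebyshev: A * B ≥ (c-1) log c
lemma cheb (p c : ℝ) (hp : 1 < p) (hc : 1 < c) :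
    (c - 1) * Real.log c ≤
      (∫ t in (1:ℝ)..c, t ^ (p - 1)) * ∫ t in (1:ℝ)..c, t ^ (-p) := by
  set A := ∫ t in (1:ℝ)..c, t ^ (p - 1) with hA
  set B := ∫ t in (1:ℝ)..c, t ^ (-p) with hB
  have hc1 : (1:ℝ) ≤ c := hc.le
  have hmem : ∀ x ∈ Set.uIcc (1:ℝ) c, 0 < x := by
    intro x hx
    rw [Set.uIcc_of_le hc1] at hx
    linarith [hx.1]
  have contf : ContinuousOn (fun t : ℝ => t ^ (p - 1)) (Set.uIcc 1 c) := by
    apply ContinuousOn.rpow_const continuousOn_id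
    intro x hx; exact Or.inl (hmem x hx).ne'
  have contg : ContinuousOn (fun t : ℝ => t ^ (-p)) (Set.uIcc 1 c) := by
    apply ContinuousOn.rpow_const continuousOn_id
    intro x hx; exact Or.inl (hmem x hx).ne'
  have continv : ContinuousOn (fun t : ℝ => t⁻¹) (Set.uIcc 1 c) :=
    ContinuousOn.inv₀ continuousOn_id (fun x hx => (hmem x hx).ne')
  -- step: for s in [1,c], (c-1)*s⁻¹ + log c ≤ s^(p-1) * B + s^(-p) * A
  have step : ∀ s ∈ Set.uIcc (1:ℝ) c,
      (c - 1) * s⁻¹ + Real.log c ≤ s ^ (p - 1) * B + s ^ (-p) * A := by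
    intro s hsmem
    have hs : 0 < s := hmem s hsmem
    have h1 : ∫ t in (1:ℝ)..c, (s⁻¹ + t⁻¹) = (c - 1) * s⁻¹ + Real.log c := by
      rw [intervalIntegral.integral_add intervalIntegrable_const
          (continv.intervalIntegrable)]
      have : ∫ t in (1:ℝ)..c, t⁻¹ = Real.log c := by
        rw [integral_inv (by rw [Set.uIcc_of_le hc1]; intro h; linarith [h.1])]
        simp
      rw [this]
      simp [mul_comm]
    have h2 : ∫ t in (1:ℝ)..c, (s ^ (p - 1) * t ^ (-p) + t ^ (p - 1) * s ^ (-p))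
        = s ^ (p - 1) * B + s ^ (-p) * A := by
      rw [intervalIntegral.integral_add (f := fun t => s ^ (p - 1) * t ^ (-p))
          (g := fun t => t ^ (p - 1) * s ^ (-p))
          ((continuousOn_const.mul contg).intervalIntegrable)
          ((contf.mul continuousOn_const).intervalIntegrable)]
      rw [intervalIntegral.integral_const_mul, intervalIntegral.integral_mul_const]
      ring
    rw [← h1, ← h2]
    apply intervalIntegral.integral_mono_on hc1
    · exact (ContinuousOn.add continuousOn_const continv).intervalIntegrable
    · exact (ContinuousOn.add (continuousOn_const.mul contg)
        (contf.mul continuousOn_const)).intervalIntegrable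
    · intro t ht
      have ht' : 0 < t := hmem t (by rw [Set.uIcc_of_le hc1]; exact ht)
      exact ptwise p hp hs ht'
  -- integrate over s
  have h3 : ∫ s in (1:ℝ)..c, ((c - 1) * s⁻¹ + Real.log c)
      = 2 * ((c - 1) * Real.log c) := by
    rw [intervalIntegral.integral_add (f := fun s => (c - 1) * s⁻¹) (g := fun _ => Real.log c)
        ((continuousOn_const.mul continv).intervalIntegrable)
        intervalIntegrable_const]
    rw [intervalIntegral.integral_const_mul]
    have : ∫ t in (1:ℝ)..c, t⁻¹ = Real.log c := by
      rw [integral_inv (by rw [Set.uIcc_of_le hc1]; intro h; linarith [h.1])]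
      simp
    rw [this]
    simp [smul_eq_mul]; ring
  have h4 : ∫ s in (1:ℝ)..c, (s ^ (p - 1) * B + s ^ (-p) * A) = 2 * (A * B) := by
    rw [intervalIntegral.integral_add (f := fun s => s ^ (p - 1) * B) (g := fun s => s ^ (-p) * A)
        (contf.mul continuousOn_const).intervalIntegrable
        (contg.mul continuousOn_const).intervalIntegrable]
    rw [intervalIntegral.integral_mul_const, intervalIntegral.integral_mul_const]
    ring
  have h5 : 2 * ((c - 1) * Real.log c) ≤ 2 * (A * B) := by
    rw [← h3, ← h4]
    apply intervalIntegral.integral_mono_on hc1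
    · exact (ContinuousOn.add (continuousOn_const.mul continv)
        continuousOn_const).intervalIntegrable
    · exact (ContinuousOn.add (contf.mul continuousOn_const)
        (contg.mul continuousOn_const)).intervalIntegrable
    · intro s hs
      exact step s (by rw [Set.uIcc_of_le hc1]; exact hs)
  linarith

theorem stmt_5 (p c : ℝ) (hp : 1 < p) (hc : 1 < c) :
    0 ≤ (c ^ p - 1) * (c ^ (p - 1) - 1) / (c ^ (p - 1) * (c - 1))
        - p * (p - 1) * Real.log c := by
  have hc1 : (1:ℝ) ≤ c := hc.le
  have hzero : (0:ℝ) ∉ Set.uIcc (1:ℝ) c := by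
    rw [Set.uIcc_of_le hc1]; intro h; linarith [h.1]
  have hA : (∫ t in (1:ℝ)..c, t ^ (p - 1)) = (c ^ p - 1) / p := by
    rw [integral_rpow (Or.inl (by linarith))]
    rw [show p - 1 + 1 = p by ring, Real.one_rpow]
  have hB : (∫ t in (1:ℝ)..c, t ^ (-p)) = (1 - (c ^ (p - 1))⁻¹) / (p - 1) := by
    rw [integral_rpow (Or.inr ⟨by intro h; apply absurd (neg_injective h); linarith, hzero⟩)]
    rw [Real.one_rpow, show -p + 1 = -(p - 1) by ring,
        Real.rpow_neg (by linarith : (0:ℝ) ≤ c), div_neg, ← neg_div, neg_sub]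
  have key := cheb p c hp hc
  rw [hA, hB] at key
  have hcp : (0:ℝ) < c ^ (p - 1) := Real.rpow_pos_of_pos (by linarith) _
  have hpc : c ^ p = c ^ (p - 1) * c := by
    rw [← Real.rpow_add_one (by linarith : c ≠ 0) (p - 1), sub_add_cancel]
  have e : (c ^ p - 1) * (c ^ (p - 1) - 1) / (c ^ (p - 1) * (c - 1))
      = p * (p - 1) * ((c ^ p - 1) / p * ((1 - (c ^ (p - 1))⁻¹) / (p - 1))) / (c - 1) := by
    have hX : c ^ (p - 1) ≠ 0 := hcp.ne'
    have h1 : p ≠ 0 := by linarith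
    have h2 : p - 1 ≠ 0 := by intro h; linarith [sub_eq_zero.mp h]
    have h3 : c - 1 ≠ 0 := by intro h; linarith [sub_eq_zero.mp h]
    rw [hpc]
    field_simp
  rw [e, sub_nonneg, le_div_iff₀ (by linarith : (0:ℝ) < c - 1)]
  nlinarith [mul_le_mul_of_nonneg_left key
    (show (0:ℝ) ≤ p * (p - 1) by nlinarith)]
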